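/- Let $A$ be a nonnegative integer matrix mapping to the pair of semistandard tableaux $(P,Q)$ of common shape $\lambda$ under the RSK correspondence. Then $\mathrm{zigzag}(A) = \lambda_1$, the length of the first row of $\lambda$. In particular, $\lambda$ has a single row if and only if the support of $A$ is contained in a zigzag. -/

import Mathlib

/-- A set of matrix positions is a zigzag if any two of its elements are
comparable in the componentwise order. -/
def IsZigzag {k p : ℕ} (Z : Finset (Fin k × Fin p)) : Prop :=
  ∀ q ∈ Z, ∀ q' ∈ Z, (q.1 ≤ q'.1 ∧ q.2 ≤ q'.2) ∨ (q'.1 ≤ q.1 ∧ q'.2 ≤ q.2)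

/-- The zigzag number of a nonnegative integer matrix. -/
noncomputable def zigzagNum {k p : ℕ} (A : Fin k → Fin p → ℕ) : ℕ :=
  sSup {s : ℕ | ∃ Z : Finset (Fin k × Fin p), IsZigzag Z ∧ s = ∑ q ∈ Z, A q.1 q.2}

/-- The support of `A` is (contained in) a zigzag. -/
def IsZigzagMatrix {k p : ℕ} (A : Fin k → Fin p → ℕ) : Prop :=
  ∀ (i : Fin k) (j : Fin p) (i' : Fin k) (j' : Fin p),
    A i j ≠ 0 → A i' j' ≠ 0 → (i ≤ i' ∧ j ≤ j') ∨ (i' ≤ i ∧ j' ≤ j)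

/-- Schensted row insertion of `x` into a weakly increasing row: returns the new
row and the bumped entry, if any. -/
def rowInsert (x : ℕ) : List ℕ → List ℕ × Option ℕ
  | [] => ([x], none)
  | h :: t =>
    if h ≤ x then
      let r := rowInsert x t
      (h :: r.1, r.2)
    else (x :: t, some h)

/-- RSK insertion of an entry into a tableau (a list of rows). -/
def tabInsert : List (List ℕ) → ℕ → List (List ℕ)
  | [], x => [[x]]
  | r :: rest, x =>
    match rowInsert x r with
    | (r', none) => r' :: rest
    | (r', some y) => r' :: tabInsert rest y

/-- The insertion tableau `P` of a word under RSK. -/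
def insertionTableau (w : List ℕ) : List (List ℕ) := w.foldl tabInsert []

/-- The RSK word of a `ℕ`-matrix `A`: the bottom row of its biword, read in
row-major order (column index `j` repeated `A i j` times). -/
def rskWord {k p : ℕ} (A : Fin k → Fin p → ℕ) : List ℕ :=
  ((List.finRange k).map fun i =>
    ((List.finRange p).map fun j => List.replicate (A i j) (j : ℕ)).flatten).flatten


section ZigzagAux



lemma rowInsert_all_le {x : ℕ} : ∀ {r : List ℕ}, (∀ a ∈ r, a ≤ x) →
    rowInsert x r = (r ++ [x], none)
  | [], _ => rfl
  | h :: t, H => by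
    have hh : h ≤ x := H h (by simp)
    have ih := rowInsert_all_le (x := x) (r := t) (fun a ha => H a (List.mem_cons_of_mem _ ha))
    simp [rowInsert, hh, ih]

lemma rowInsert_none {x : ℕ} : ∀ {r : List ℕ}, (rowInsert x r).2 = none → ∀ a ∈ r, a ≤ x
  | [], _ => by simp
  | h :: t, H => by
    by_cases hh : h ≤ x
    · simp only [rowInsert, if_pos hh] at H
      intro a ha
      rcases List.mem_cons.1 ha with rfl | ha
      · exact hh
      · exact rowInsert_none H a ha
    · simp [rowInsert, hh] at H

lemma rowInsert_bump {x : ℕ} : ∀ (r : List ℕ) (m : ℕ) (hm : m < r.length),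
    x < r[m] → (∀ j (hj : j < m), r[j]'(lt_trans hj hm) ≤ x) →
    rowInsert x r = (r.set m x, some r[m])
  | [], m, hm => by simp at hm
  | h :: t, 0, hm => by
    intro hx _
    have : ¬ h ≤ x := by simpa using Nat.not_le.2 hx
    simp [rowInsert, this]
  | h :: t, m + 1, hm => by
    intro hx hmin
    have hh : h ≤ x := hmin 0 (Nat.succ_pos m)
    have ih := rowInsert_bump t m (by simpa using Nat.lt_of_succ_lt_succ hm)
      (by simpa using hx) (fun j hj => by simpa using hmin (j+1) (Nat.succ_lt_succ hj))
    simp [rowInsert, hh, ih]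

lemma le_getLast_of_sorted {s : List ℕ} (hs : s.Pairwise (· ≤ ·)) {b a : ℕ}
    (hb : b ∈ s) (ha : s.getLast? = some a) : b ≤ a := by
  obtain ⟨s', rfl⟩ := List.getLast?_eq_some_iff.1 ha
  rcases List.mem_append.1 hb with hb | hb
  · exact (List.pairwise_append.1 hs).2.2 b hb a (by simp)
  · simp at hb; omega

lemma sorted_concat {s : List ℕ} {x : ℕ} (hs : s.Pairwise (· ≤ ·))
    (h : ∀ b ∈ s, b ≤ x) : (s ++ [x]).Pairwise (· ≤ ·) :=
  List.pairwise_append.2 ⟨hs, by simp, fun a ha b hb => by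
    simp only [List.mem_singleton] at hb; exact hb ▸ h a ha⟩

def RowInv (w r : List ℕ) : Prop :=
  r.Pairwise (· ≤ ·) ∧
  (∀ j (hj : j < r.length), ∃ s : List ℕ, s.Sublist w ∧ s.Pairwise (· ≤ ·) ∧
      s.length = j + 1 ∧ s.getLast? = some r[j]) ∧
  (∀ s : List ℕ, s.Sublist w → s.Pairwise (· ≤ ·) → ∀ a, s.getLast? = some a →
      ∃ hj : s.length - 1 < r.length, r[s.length - 1] ≤ a)

lemma rowInv_nil : RowInv [] [] := by
  refine ⟨by simp, by simp, fun s hs _ a ha => ?_⟩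
  rw [List.sublist_nil.1 hs] at ha; simp at ha

lemma rowInv_step {w r : List ℕ} {x : ℕ} (h : RowInv w r) :
    RowInv (w ++ [x]) (rowInsert x r).1 := by
  obtain ⟨hsort, hsound, hcomp⟩ := h
  have hwx : w.Sublist (w ++ [x]) := List.sublist_append_left _ _
  have hsx : [x].Sublist (w ++ [x]) := List.sublist_append_right _ _
  have hget : ∀ i j (hi : i < r.length) (hj : j < r.length), i ≤ j → r[i] ≤ r[j] := by
    intro i j hi hj hij
    rcases Nat.lt_or_ge i j with h' | h'
    · exact List.pairwise_iff_getElem.1 hsort i j hi hj h'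
    · have : i = j := by omega
      subst this; exact le_refl _
  have extend : ∀ s : List ℕ, s.Sublist w → s.Pairwise (· ≤ ·) → ∀ b, s.getLast? = some b →
      b ≤ x → (s ++ [x]).Sublist (w ++ [x]) ∧ (s ++ [x]).Pairwise (· ≤ ·) ∧
        (s ++ [x]).getLast? = some x := by
    intro s hsub hp b hb hbx
    refine ⟨hsub.append (List.Sublist.refl _), ?_, List.getLast?_concat⟩
    exact sorted_concat hp (fun c hc => le_trans (le_getLast_of_sorted hp hc hb) hbx)
  by_cases hall : ∀ a ∈ r, a ≤ x
  · rw [rowInsert_all_le hall]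
    have hlen : (r ++ [x]).length = r.length + 1 := by simp
    refine ⟨sorted_concat hsort hall, ?_, ?_⟩
    · intro j hj
      rw [hlen] at hj
      rcases Nat.lt_or_ge j r.length with hjr | hjr
      · obtain ⟨s, h1, h2, h3, h4⟩ := hsound j hjr
        exact ⟨s, h1.trans hwx, h2, h3, by rwa [List.getElem_append_left hjr]⟩
      · have hj' : j = r.length := by omega
        subst hj'
        rw [List.getElem_concat_length rfl]
        rcases Nat.eq_zero_or_pos r.length with h0 | h0
        · have hr : r = [] := List.length_eq_zero_iff.1 h0
          subst hr
          exact ⟨[x], hsx, by simp, by simp, by simp⟩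
        · obtain ⟨s, h1, h2, h3, h4⟩ := hsound (r.length - 1) (by omega)
          have hle : r[r.length - 1] ≤ x := hall _ (List.getElem_mem _)
          obtain ⟨e1, e2, e3⟩ := extend s h1 h2 _ h4 hle
          refine ⟨s ++ [x], e1, e2, ?_, e3⟩
          simp only [List.length_append, List.length_singleton, h3]
          omega
    · intro s hsub hp a ha
      rw [List.sublist_append_iff] at hsub
      obtain ⟨s₁, s₂, rfl, hs₁, hs₂⟩ := hsub
      have hp₁ : s₁.Pairwise (· ≤ ·) := (List.pairwise_append.1 hp).1
      rcases (by simpa using hs₂ : s₂ = [] ∨ s₂ = [x]) with rfl | rfl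
      · simp only [List.append_nil] at ha ⊢
        obtain ⟨hj, hle⟩ := hcomp s₁ hs₁ hp₁ a ha
        exact ⟨by rw [hlen]; omega, by rwa [List.getElem_append_left hj]⟩
      · have hax : a = x := by
          rw [List.getLast?_concat] at ha; exact (Option.some_inj.1 ha).symm
        rw [hax]
        rcases List.eq_nil_or_concat s₁ with rfl | hcon
        · refine ⟨by simp, ?_⟩
          simp only [List.nil_append, List.length_singleton, Nat.sub_self]
          rcases Nat.eq_zero_or_pos r.length with h0 | h0
          · have hr : r = [] := List.length_eq_zero_iff.1 h0
            subst hr; simp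
          · rw [List.getElem_append_left h0]
            exact hall _ (List.getElem_mem _)
        · obtain ⟨s₁', b, hcc⟩ := hcon
          rw [List.concat_eq_append] at hcc
          subst hcc
          have hb : (s₁' ++ [b]).getLast? = some b := List.getLast?_concat
          obtain ⟨hj, hle⟩ := hcomp _ hs₁ hp₁ b hb
          have hlen1 : (s₁' ++ [b]).length = s₁'.length + 1 := by simp
          simp only [List.length_append, List.length_singleton, Nat.add_sub_cancel] at hj hle ⊢
          refine ⟨by omega, ?_⟩
          rcases Nat.lt_or_ge (s₁'.length + 1) r.length with hc | hc
          · rw [List.getElem_append_left hc]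
            exact hall _ (List.getElem_mem _)
          · have hc' : s₁'.length + 1 = r.length := by omega
            exact le_of_eq (List.getElem_concat_length hc' _)
  · push_neg at hall
    obtain ⟨a₀, ha₀, ha₀x⟩ := hall
    have hex : ∃ m, ∃ hm : m < r.length, x < r[m] := by
      obtain ⟨m, hm, rfl⟩ := List.mem_iff_getElem.1 ha₀
      exact ⟨m, hm, by omega⟩
    classical
    obtain ⟨m, hm, hxm, hmin⟩ : ∃ m, ∃ hm : m < r.length, x < r[m] ∧
        ∀ j, j < m → ∀ hj : j < r.length, r[j] ≤ x := by
      refine ⟨Nat.find hex, (Nat.find_spec hex).1, (Nat.find_spec hex).2, ?_⟩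
      intro j hj hjr
      have := Nat.find_min hex hj
      push_neg at this
      exact this hjr
    rw [rowInsert_bump r m hm hxm (fun j hj => hmin j hj _)]
    simp only
    have hlen : (r.set m x).length = r.length := by simp
    have hget' : ∀ j (hj : j < r.length), (r.set m x)[j]'(by simpa using hj) =
        if m = j then x else r[j] := by
      intro j hj; exact List.getElem_set _
    have hsetle : ∀ j (hj : j < r.length), (r.set m x)[j]'(by simpa using hj) ≤ r[j] := by
      intro j hj
      rw [hget' j hj]
      rcases eq_or_ne m j with rfl | hmj
      · rw [if_pos rfl]; exact Nat.le_of_lt hxm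
      · rw [if_neg hmj]
    refine ⟨?_, ?_, ?_⟩
    · rw [List.pairwise_iff_getElem]
      intro i j hi hj hij
      rw [hlen] at hi hj
      rw [hget' i hi, hget' j hj]
      rcases eq_or_ne m i with rfl | hmi
      · rw [if_pos rfl, if_neg (by omega)]
        exact le_trans (Nat.le_of_lt hxm) (hget m j hi hj (Nat.le_of_lt hij))
      · rw [if_neg hmi]
        rcases eq_or_ne m j with rfl | hmj
        · rw [if_pos rfl]
          exact hmin i hij hi
        · rw [if_neg hmj]
          exact hget i j hi hj (Nat.le_of_lt hij)
    · intro j hj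
      rw [hlen] at hj
      rw [hget' j hj]
      rcases eq_or_ne m j with rfl | hmj
      · rw [if_pos rfl]
        rcases Nat.eq_zero_or_pos m with h0 | h0
        · exact ⟨[x], hsx, by simp, by simp [h0], by simp⟩
        · obtain ⟨s, h1, h2, h3, h4⟩ := hsound (m - 1) (by omega)
          have hle : r[m - 1] ≤ x := hmin (m - 1) (by omega) _
          obtain ⟨e1, e2, e3⟩ := extend s h1 h2 _ h4 hle
          refine ⟨s ++ [x], e1, e2, ?_, e3⟩
          simp only [List.length_append, List.length_singleton, h3]
          omega
      · rw [if_neg hmj]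
        obtain ⟨s, h1, h2, h3, h4⟩ := hsound j hj
        exact ⟨s, h1.trans hwx, h2, h3, h4⟩
    · intro s hsub hp a ha
      rw [List.sublist_append_iff] at hsub
      obtain ⟨s₁, s₂, rfl, hs₁, hs₂⟩ := hsub
      have hp₁ : s₁.Pairwise (· ≤ ·) := (List.pairwise_append.1 hp).1
      rcases (by simpa using hs₂ : s₂ = [] ∨ s₂ = [x]) with rfl | rfl
      · simp only [List.append_nil] at ha ⊢
        obtain ⟨hj, hle⟩ := hcomp s₁ hs₁ hp₁ a ha
        exact ⟨by rwa [hlen], le_trans (hsetle _ hj) hle⟩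
      · have hax : a = x := by
          rw [List.getLast?_concat] at ha; exact (Option.some_inj.1 ha).symm
        rw [hax]
        rcases List.eq_nil_or_concat s₁ with rfl | hcon
        · refine ⟨by rw [hlen]; simp; omega, ?_⟩
          simp only [List.nil_append, List.length_singleton, Nat.sub_self]
          rw [hget' 0 (by omega)]
          rcases eq_or_ne m 0 with rfl | hm0
          · simp
          · rw [if_neg hm0]
            exact hmin 0 (by omega) _
        · obtain ⟨s₁', b, hcc⟩ := hcon
          rw [List.concat_eq_append] at hcc
          subst hcc
          have hb : (s₁' ++ [b]).getLast? = some b := List.getLast?_concat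
          obtain ⟨hj, hle⟩ := hcomp _ hs₁ hp₁ b hb
          have hbx : b ≤ x := (List.pairwise_append.1 hp).2.2 b (by simp) x (by simp)
          have hlen1 : (s₁' ++ [b]).length = s₁'.length + 1 := by simp
          simp only [List.length_append, List.length_singleton, Nat.add_sub_cancel] at hj hle ⊢
          have hlt : s₁'.length < m := by
            by_contra hcontra
            push_neg at hcontra
            have := hget m s₁'.length hm hj hcontra
            omega
          refine ⟨by rw [hlen]; omega, ?_⟩
          rw [hget' _ (by omega)]
          rcases eq_or_ne m (s₁'.length + 1) with he | he
          · rw [if_pos he]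
          · rw [if_neg he]
            exact hmin (s₁'.length + 1) (by omega) _

def lrow (w : List ℕ) : List ℕ := w.foldl (fun r x => (rowInsert x r).1) []

lemma lrow_concat (w : List ℕ) (x : ℕ) : lrow (w ++ [x]) = (rowInsert x (lrow w)).1 :=
  List.foldl_concat _ _ _ _

lemma rowInv_lrow (w : List ℕ) : RowInv w (lrow w) := by
  induction w using List.reverseRecOn with
  | nil => exact rowInv_nil
  | append_singleton w x ih => rw [lrow_concat]; exact rowInv_step ih

lemma tabInsert_headD (T : List (List ℕ)) (x : ℕ) :
    (tabInsert T x).headD [] = (rowInsert x (T.headD [])).1 := by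
  cases T with
  | nil => rfl
  | cons r rest =>
    rcases h : rowInsert x r with ⟨r', o⟩
    cases o <;> simp [tabInsert, h]

lemma insertionTableau_headD (w : List ℕ) :
    (insertionTableau w).headD [] = lrow w := by
  suffices H : ∀ (T : List (List ℕ)) (w : List ℕ),
      (w.foldl tabInsert T).headD [] = w.foldl (fun r x => (rowInsert x r).1) (T.headD []) by
    exact H [] w
  intro T w
  induction w generalizing T with
  | nil => rfl
  | cons x w ih => simp only [List.foldl_cons, ih, tabInsert_headD]

lemma insertionTableau_of_sorted (w : List ℕ) (hw : w.Pairwise (· ≤ ·)) :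
    insertionTableau w = if w = [] then [] else [w] := by
  induction w using List.reverseRecOn with
  | nil => rfl
  | append_singleton w x ih =>
    have hw' : w.Pairwise (· ≤ ·) := (List.pairwise_append.1 hw).1
    have hall : ∀ a ∈ w, a ≤ x := fun a ha =>
      (List.pairwise_append.1 hw).2.2 a ha x (by simp)
    have : insertionTableau (w ++ [x]) = tabInsert (insertionTableau w) x :=
      List.foldl_concat _ _ _ _
    rw [this, ih hw']
    rcases List.eq_nil_or_concat w with rfl | ⟨w', y, rfl⟩
    · simp [tabInsert]
    · rw [if_neg (by simp)]
      rw [if_neg (by simp [List.concat_eq_append])]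
      simp only [List.concat_eq_append]
      show tabInsert [w' ++ [y]] x = [w' ++ [y] ++ [x]]
      rw [show tabInsert [w' ++ [y]] x =
        match rowInsert x (w' ++ [y]) with
        | (r', none) => r' :: []
        | (r', some y') => r' :: tabInsert [] y' from rfl]
      rw [rowInsert_all_le (by simpa using hall)]

lemma length_le_tabInsert : ∀ (T : List (List ℕ)) (x : ℕ), T.length ≤ (tabInsert T x).length
  | [], x => by simp [tabInsert]
  | r :: rest, x => by
    rcases h : rowInsert x r with ⟨r', o⟩
    cases o with
    | none => simp [tabInsert, h]
    | some y =>
      simp only [tabInsert, h, List.length_cons, Nat.succ_le_succ_iff]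
      exact length_le_tabInsert rest y

lemma sorted_of_insertionTableau_len (w : List ℕ)
    (h : (insertionTableau w).length ≤ 1) : w.Pairwise (· ≤ ·) := by
  induction w using List.reverseRecOn with
  | nil => simp
  | append_singleton w x ih =>
    have hstep : insertionTableau (w ++ [x]) = tabInsert (insertionTableau w) x :=
      List.foldl_concat _ _ _ _
    rw [hstep] at h
    have hw : (insertionTableau w).length ≤ 1 :=
      le_trans (length_le_tabInsert _ _) h
    have hsw := ih hw
    rcases List.eq_nil_or_concat w with rfl | ⟨w', y, rfl⟩
    · simp
    · rw [insertionTableau_of_sorted _ hsw, if_neg (by simp [List.concat_eq_append])] at h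
      simp only [List.concat_eq_append] at *
      rw [show tabInsert [w' ++ [y]] x =
        match rowInsert x (w' ++ [y]) with
        | (r', none) => r' :: []
        | (r', some y') => r' :: tabInsert [] y' from rfl] at h
      rcases hri : rowInsert x (w' ++ [y]) with ⟨r', o⟩
      cases o with
      | some z => rw [hri] at h; simp [tabInsert] at h
      | none =>
        have hall : ∀ a ∈ w' ++ [y], a ≤ x := rowInsert_none (by rw [hri])
        exact sorted_concat hsw hall

def pairsL (k p : ℕ) : List (Fin k × Fin p) :=
  ((List.finRange k).map fun i => (List.finRange p).map fun j => (i, j)).flatten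

lemma rskWord_eq {k p : ℕ} (A : Fin k → Fin p → ℕ) :
    rskWord A = ((pairsL k p).map fun q => List.replicate (A q.1 q.2) ((q.2 : ℕ))).flatten := by
  simp [rskWord, pairsL, List.map_flatten, List.map_map, List.flatten_flatten, Function.comp_def]

lemma mem_pairsL {k p : ℕ} (q : Fin k × Fin p) : q ∈ pairsL k p := by
  simp only [pairsL, List.mem_flatten, List.mem_map]
  exact ⟨(List.finRange p).map fun j => (q.1, j), ⟨q.1, List.mem_finRange _, rfl⟩,
    by simp [List.mem_map]⟩

def SLex {k p : ℕ} (q q' : Fin k × Fin p) : Prop :=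
  q.1 < q'.1 ∨ (q.1 = q'.1 ∧ q.2 < q'.2)

lemma pairsL_pairwise (k p : ℕ) : (pairsL k p).Pairwise SLex := by
  rw [pairsL, List.pairwise_flatten]
  constructor
  · intro l hl
    simp only [List.mem_map] at hl
    obtain ⟨i, _, rfl⟩ := hl
    rw [List.pairwise_map]
    exact (List.pairwise_lt_finRange p).imp fun h => Or.inr ⟨rfl, h⟩
  · rw [List.pairwise_map]
    refine (List.pairwise_lt_finRange k).imp ?_
    intro i i' hii' q hq q' hq'
    simp only [List.mem_map] at hq hq'
    obtain ⟨j, _, rfl⟩ := hq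
    obtain ⟨j', _, rfl⟩ := hq'
    exact Or.inl hii'

lemma pairsL_nodup (k p : ℕ) : (pairsL k p).Nodup :=
  (pairsL_pairwise k p).imp fun h => by
    rcases h with h | ⟨h1, h2⟩
    · intro he; rw [he] at h; exact lt_irrefl _ h
    · intro he; rw [he] at h2; exact lt_irrefl _ h2

lemma flatten_sublist {α : Type*} {l₁ l₂ : List (List α)} (h : l₁.Sublist l₂) :
    l₁.flatten.Sublist l₂.flatten := by
  induction h with
  | slnil => exact List.Sublist.refl _
  | cons a _ ih => exact ih.trans (List.sublist_append_right _ _)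
  | cons_cons a _ ih => exact (List.Sublist.refl a).append ih

def blkA {k p : ℕ} (A : Fin k → Fin p → ℕ) (q : Fin k × Fin p) : List ℕ :=
  List.replicate (A q.1 q.2) ((q.2 : ℕ))

lemma rskWord_eq' {k p : ℕ} (A : Fin k → Fin p → ℕ) :
    rskWord A = ((pairsL k p).map (blkA A)).flatten := rskWord_eq A

lemma zig_to_incr {k p : ℕ} (A : Fin k → Fin p → ℕ) (Z : Finset (Fin k × Fin p))
    (hZ : IsZigzag Z) : ∃ s : List ℕ, s.Sublist (rskWord A) ∧ s.Pairwise (· ≤ ·) ∧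
      s.length = ∑ q ∈ Z, A q.1 q.2 := by
  classical
  set Zl := (pairsL k p).filter (fun q => q ∈ Z) with hZldef
  have hZlsub : Zl.Sublist (pairsL k p) := List.filter_sublist
  have hnd : Zl.Nodup := List.Nodup.sublist hZlsub (pairsL_nodup k p)
  have hmem : ∀ q, q ∈ Zl ↔ q ∈ Z := by
    intro q
    simp only [hZldef, List.mem_filter, decide_eq_true_eq, mem_pairsL q, true_and]
  have htfin : Zl.toFinset = Z := Finset.ext fun q => by
    rw [List.mem_toFinset]; exact hmem q
  refine ⟨(Zl.map (blkA A)).flatten, ?_, ?_, ?_⟩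
  · rw [rskWord_eq']; exact flatten_sublist (hZlsub.map _)
  · rw [List.pairwise_flatten]
    constructor
    · intro l hl
      simp only [List.mem_map] at hl
      obtain ⟨q, _, rfl⟩ := hl
      exact List.pairwise_replicate.2 (Or.inr (le_refl _))
    · rw [List.pairwise_map]
      have h1 : Zl.Pairwise SLex := (pairsL_pairwise k p).sublist hZlsub
      refine h1.imp_of_mem ?_
      intro q q' hq hq' hlex u hu v hv
      have hu' : u = (q.2 : ℕ) := List.eq_of_mem_replicate hu
      have hv' : v = (q'.2 : ℕ) := List.eq_of_mem_replicate hv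
      subst hu'; subst hv'
      have hqZ : q ∈ Z := (hmem q).1 hq
      have hq'Z : q' ∈ Z := (hmem q').1 hq'
      have := hZ q hqZ q' hq'Z
      simp only [SLex, Fin.lt_def, Fin.le_def, Fin.ext_iff] at this hlex ⊢
      omega
  · rw [List.length_flatten, List.map_map]
    have e1 : (Zl.map (List.length ∘ blkA A)).sum = (Zl.map fun q => A q.1 q.2).sum := by
      congr 1
      exact List.map_congr_left fun q _ => by simp [blkA]
    rw [e1, ← List.sum_toFinset _ hnd, htfin]

lemma sublist_flatten_decomp {α β : Type*} (f : α → List β) :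
    ∀ (l : List α) (s : List β), s.Sublist ((l.map f).flatten) →
      ∃ t : List (List β), List.Forall₂ (fun b a => b.Sublist (f a)) t l ∧ s = t.flatten := by
  intro l
  induction l with
  | nil =>
    intro s hs
    simp only [List.map_nil, List.flatten_nil, List.sublist_nil] at hs
    exact ⟨[], List.Forall₂.nil, by simp [hs]⟩
  | cons a l ih =>
    intro s hs
    simp only [List.map_cons, List.flatten_cons] at hs
    rw [List.sublist_append_iff] at hs
    obtain ⟨s₁, s₂, rfl, h1, h2⟩ := hs
    obtain ⟨t, ht, rfl⟩ := ih s₂ h2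
    exact ⟨s₁ :: t, List.Forall₂.cons h1 ht, by simp⟩

lemma sum_length_le {k p : ℕ} (A : Fin k → Fin p → ℕ) :
    ∀ zl : List (List ℕ × (Fin k × Fin p)),
      (∀ bq ∈ zl, bq.1.Sublist (blkA A bq.2)) →
      (zl.map fun bq => bq.1.length).sum ≤
        ((zl.filter fun bq => !bq.1.isEmpty).map fun bq => A bq.2.1 bq.2.2).sum := by
  intro zl
  induction zl with
  | nil => simp
  | cons bq zl ih =>
    intro H
    have ih' := ih (fun b hb => H b (List.mem_cons_of_mem _ hb))
    by_cases hbq : bq.1.isEmpty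
    · have h0 : bq.1.length = 0 := by
        rw [List.isEmpty_iff.1 hbq]; rfl
      simp only [List.map_cons, List.sum_cons, h0, Nat.zero_add, List.filter_cons, hbq,
        Bool.not_true, Bool.false_eq_true, if_false]
      exact ih'
    · have hb : bq.1.length ≤ A bq.2.1 bq.2.2 := by
        have := (H bq (List.mem_cons_self)).length_le
        simpa [blkA] using this
      simp only [List.map_cons, List.sum_cons, List.filter_cons]
      rw [if_pos (by simp [hbq])]
      simp only [List.map_cons, List.sum_cons]
      exact Nat.add_le_add hb ih'

lemma incr_to_zig {k p : ℕ} (A : Fin k → Fin p → ℕ) (s : List ℕ)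
    (hsub : s.Sublist (rskWord A)) (hsort : s.Pairwise (· ≤ ·)) :
    ∃ Z : Finset (Fin k × Fin p), IsZigzag Z ∧ s.length ≤ ∑ q ∈ Z, A q.1 q.2 := by
  classical
  rw [rskWord_eq'] at hsub
  obtain ⟨t, hft, rfl⟩ := sublist_flatten_decomp (blkA A) (pairsL k p) s hsub
  have hlen : t.length = (pairsL k p).length := hft.length_eq
  set zl := t.zip (pairsL k p) with hzldef
  have hzmem : ∀ bq ∈ zl, bq.1.Sublist (blkA A bq.2) := by
    rintro ⟨b, q⟩ hbq
    exact (List.forall₂_iff_zip.1 hft).2 hbq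
  have hmapfst : zl.map Prod.fst = t := List.map_fst_zip (le_of_eq hlen)
  have hmapsnd : zl.map Prod.snd = pairsL k p := List.map_snd_zip (le_of_eq hlen.symm)
  have hcross : t.Pairwise (fun b b' => ∀ u ∈ b, ∀ v ∈ b', u ≤ v) :=
    (List.pairwise_flatten.1 hsort).2
  have hzl1 : zl.Pairwise (fun bq bq' => ∀ u ∈ bq.1, ∀ v ∈ bq'.1, u ≤ v) := by
    rw [← hmapfst] at hcross; exact List.pairwise_map.1 hcross
  have hzl2 : zl.Pairwise (fun bq bq' => SLex bq.2 bq'.2) := by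
    have h := pairsL_pairwise k p
    rw [← hmapsnd] at h; exact List.pairwise_map.1 h
  set F := zl.filter (fun bq => !bq.1.isEmpty) with hFdef
  have hFzl : F.Sublist zl := List.filter_sublist
  have hF1 := hzl1.sublist hFzl
  have hF2 := hzl2.sublist hFzl
  have hFfacts : ∀ bq ∈ F, bq.1 ≠ [] ∧ bq.1.Sublist (blkA A bq.2) := by
    intro bq hbq
    have h' := List.mem_filter.1 hbq
    refine ⟨?_, hzmem bq h'.1⟩
    intro hnil
    rw [hnil] at h'
    simp at h'
  have hcomb : F.Pairwise (fun bq bq' => bq.2.1 ≤ bq'.2.1 ∧ bq.2.2 ≤ bq'.2.2) := by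
    refine (hF1.and hF2).imp_of_mem ?_
    rintro bq bq' h1 h2 ⟨hc, hlex⟩
    obtain ⟨hne, hsb⟩ := hFfacts bq h1
    obtain ⟨hne', hsb'⟩ := hFfacts bq' h2
    obtain ⟨u, hu⟩ := List.exists_mem_of_ne_nil _ hne
    obtain ⟨v, hv⟩ := List.exists_mem_of_ne_nil _ hne'
    have hu2 : u = (bq.2.2 : ℕ) := List.eq_of_mem_replicate (hsb.subset hu)
    have hv2 : v = (bq'.2.2 : ℕ) := List.eq_of_mem_replicate (hsb'.subset hv)
    have hle : (bq.2.2 : ℕ) ≤ (bq'.2.2 : ℕ) := hu2 ▸ hv2 ▸ hc u hu v hv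
    simp only [SLex, Fin.le_def, Fin.lt_def, Fin.ext_iff] at hlex ⊢
    omega
  set Zl := F.map Prod.snd with hZldef
  have hZlsub : Zl.Sublist (pairsL k p) := hmapsnd ▸ hFzl.map Prod.snd
  have hZlnd : Zl.Nodup := List.Nodup.sublist hZlsub (pairsL_nodup k p)
  have hZlpw : Zl.Pairwise (fun q q' => q.1 ≤ q'.1 ∧ q.2 ≤ q'.2) :=
    List.pairwise_map.2 hcomb
  refine ⟨Zl.toFinset, ?_, ?_⟩
  · intro q hq q' hq'
    rw [List.mem_toFinset] at hq hq'
    rcases eq_or_ne q q' with rfl | hne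
    · exact Or.inl ⟨le_refl _, le_refl _⟩
    · have hsym : Symmetric (fun q q' : Fin k × Fin p =>
        (q.1 ≤ q'.1 ∧ q.2 ≤ q'.2) ∨ (q'.1 ≤ q.1 ∧ q'.2 ≤ q.2)) := fun a b h => h.symm
      haveI : Std.Symm (fun q q' : Fin k × Fin p =>
          (q.1 ≤ q'.1 ∧ q.2 ≤ q'.2) ∨ (q'.1 ≤ q.1 ∧ q'.2 ≤ q.2)) := ⟨fun a b h => hsym h⟩
      exact (List.Pairwise.forall (R := fun q q' : Fin k × Fin p =>
          (q.1 ≤ q'.1 ∧ q.2 ≤ q'.2) ∨ (q'.1 ≤ q.1 ∧ q'.2 ≤ q.2))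
        (hZlpw.imp fun h => Or.inl h)) hq hq' hne
  · rw [List.length_flatten]
    have e1 : t.map List.length = zl.map (fun bq => bq.1.length) := by
      rw [← hmapfst, List.map_map]; rfl
    rw [e1]
    refine le_trans (sum_length_le A zl hzmem) (le_of_eq ?_)
    rw [List.sum_toFinset _ hZlnd, hZldef, List.map_map]
    rfl

end ZigzagAux

/-- If `A ↦ (P,Q)` under RSK with common shape `λ`, then
`zigzag(A) = λ₁`, the length of the first row; in particular `λ` is a single
row iff the support of `A` is contained in a zigzag. -/
theorem zigzagNum_eq_firstRow_of_RSK {k p : ℕ} (A : Fin k → Fin p → ℕ) :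
    zigzagNum A = ((insertionTableau (rskWord A)).headD []).length ∧
    ((insertionTableau (rskWord A)).length ≤ 1 ↔ IsZigzagMatrix A) := by
  classical
  set w := rskWord A with hwdef
  obtain ⟨hsort, hsound, hcomp⟩ := rowInv_lrow w
  have htot : w.length = ∑ q : Fin k × Fin p, A q.1 q.2 := by
    rw [hwdef, rskWord_eq', List.length_flatten, List.map_map]
    have h1 : ((pairsL k p).map (List.length ∘ blkA A)).sum =
        ((pairsL k p).map fun q => A q.1 q.2).sum := by
      congr 1; exact List.map_congr_left fun q _ => by simp [blkA]
    have h2 : (pairsL k p).toFinset = Finset.univ :=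
      Finset.eq_univ_of_forall fun q => List.mem_toFinset.2 (mem_pairsL q)
    rw [h1, ← List.sum_toFinset _ (pairsL_nodup k p), h2]
  have hub : ∀ s ∈ {s : ℕ | ∃ Z : Finset (Fin k × Fin p), IsZigzag Z ∧
      s = ∑ q ∈ Z, A q.1 q.2}, s ≤ w.length := by
    rintro s ⟨Z, _, rfl⟩
    rw [htot]
    exact Finset.sum_le_sum_of_subset (Finset.subset_univ Z)
  have hbdd : BddAbove {s : ℕ | ∃ Z : Finset (Fin k × Fin p), IsZigzag Z ∧
      s = ∑ q ∈ Z, A q.1 q.2} := ⟨w.length, hub⟩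
  have hne : (0 : ℕ) ∈ {s : ℕ | ∃ Z : Finset (Fin k × Fin p), IsZigzag Z ∧
      s = ∑ q ∈ Z, A q.1 q.2} := ⟨∅, by intro q hq; simp at hq, by simp⟩
  constructor
  · rw [insertionTableau_headD]
    apply le_antisymm
    · refine csSup_le ⟨0, hne⟩ ?_
      rintro s ⟨Z, hZ, rfl⟩
      obtain ⟨s', hsub, hsort', hlen'⟩ := zig_to_incr A Z hZ
      rcases List.eq_nil_or_concat s' with rfl | ⟨u, b, hub⟩
      · simp at hlen'; omega
      · rw [List.concat_eq_append] at hub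
        subst hub
        obtain ⟨hj, -⟩ := hcomp _ hsub hsort' b List.getLast?_concat
        rw [← hlen']
        omega
    · rcases Nat.eq_zero_or_pos (lrow w).length with h0 | h0
      · rw [h0]; exact Nat.zero_le _
      · obtain ⟨s, h1, h2, h3, -⟩ := hsound ((lrow w).length - 1) (by omega)
        obtain ⟨Z, hZ, hZle⟩ := incr_to_zig A s h1 h2
        have : ∑ q ∈ Z, A q.1 q.2 ≤ zigzagNum A := le_csSup hbdd ⟨Z, hZ, rfl⟩
        omega
  · constructor
    · intro hlen1
      have hsw : w.Pairwise (· ≤ ·) := sorted_of_insertionTableau_len w hlen1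
      obtain ⟨Z, hZ, hZle⟩ := incr_to_zig A w (List.Sublist.refl _) hsw
      have hsupp : ∀ q : Fin k × Fin p, A q.1 q.2 ≠ 0 → q ∈ Z := by
        intro q hq
        by_contra hnq
        have hlt : ∑ x ∈ Z, A x.1 x.2 < ∑ x : Fin k × Fin p, A x.1 x.2 :=
          Finset.sum_lt_sum_of_subset (Finset.subset_univ Z) (Finset.mem_univ q) hnq
            (Nat.pos_of_ne_zero hq) (fun _ _ _ => Nat.zero_le _)
        omega
      intro i j i' j' hA hA'
      exact hZ (i, j) (hsupp (i, j) hA) (i', j') (hsupp (i', j') hA')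
    · intro hzm
      set Z : Finset (Fin k × Fin p) :=
        Finset.univ.filter (fun q => A q.1 q.2 ≠ 0) with hZdef
      have hZ : IsZigzag Z := by
        intro q hq q' hq'
        rw [hZdef, Finset.mem_filter] at hq hq'
        exact hzm q.1 q.2 q'.1 q'.2 hq.2 hq'.2
      obtain ⟨s, h1, h2, h3⟩ := zig_to_incr A Z hZ
      have hsum : ∑ q ∈ Z, A q.1 q.2 = ∑ q : Fin k × Fin p, A q.1 q.2 := by
        rw [hZdef]
        exact Finset.sum_filter_ne_zero _
      have hlen : s.length = w.length := by rw [h3, hsum, htot]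
      have hse : s = w := h1.eq_of_length hlen
      have hsw : w.Pairwise (· ≤ ·) := hse ▸ h2
      rw [insertionTableau_of_sorted w hsw]
      split <;> simp
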